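/- Every group, regarded as a monoid, is absolutely closed: if G is a group contained as a submonoid in a monoid S, then the dominion of G in S equals G itself. -/
import Mathlib


/-- Every group, regarded as a monoid, is absolutely closed.  If `H` is a
submonoid of a monoid `S` which is a group (every element of `H` has a two-sided
inverse in `H`), then the dominion of `H` in `S` equals `H` itself. -/
theorem group_absolutely_closed
    {S : Type} [Monoid S] (H : Submonoid S)
    (hgrp : ∀ h ∈ H, ∃ h' ∈ H, h * h' = 1 ∧ h' * h = 1) :
    {d : S | ∀ (T : Type) [Monoid T] (f g : S →* T),
        (∀ u ∈ H, f u = g u) → f d = g d} = (H : Set S) := by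
  classical
  apply Set.eq_of_subset_of_subset
  · intro d hd
    by_contra hdH
    -- relation: right cosets sH
    set r : S → S → Prop := fun a b => ∃ h ∈ H, b = a * h with hr
    have hrefl : ∀ a, r a a := fun a => ⟨1, H.one_mem, (mul_one a).symm⟩
    have hsymm : ∀ a b, r a b → r b a := by
      rintro a b ⟨h, hh, rfl⟩
      obtain ⟨h', hh', hhh', _⟩ := hgrp h hh
      exact ⟨h', hh', by rw [mul_assoc, hhh', mul_one]⟩
    have htrans : ∀ a b c, r a b → r b c → r a c := by
      rintro a b c ⟨h1, hh1, rfl⟩ ⟨h2, hh2, rfl⟩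
      exact ⟨h1 * h2, H.mul_mem hh1 hh2, mul_assoc _ _ _⟩
    let sd : Setoid S := ⟨r, hrefl, fun {a b} => hsymm a b, fun {a b c} => htrans a b c⟩
    let X := Quotient sd
    have hact : ∀ (s : S) (a b : S), r a b → r (s * a) (s * b) := by
      rintro s a b ⟨h, hh, rfl⟩; exact ⟨h, hh, (mul_assoc _ _ _).symm⟩
    let act : S → X → X := fun s => Quotient.map (fun a => s * a) (hact s)
    have hQwd : ∀ a b : S, r a b → decide (a ∈ H) = decide (b ∈ H) := by
      rintro a b ⟨h, hh, rfl⟩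
      obtain ⟨h', hh', hhh', _⟩ := hgrp h hh
      by_cases ha : a ∈ H
      · simp [ha, H.mul_mem ha hh]
      · have : ¬ a * h ∈ H := by
          intro hm
          exact ha (by simpa [mul_assoc, hhh'] using H.mul_mem hm hh')
        simp [ha, this]
    let qb : X → Bool := Quotient.lift (fun a => decide (a ∈ H)) hQwd
    have act_mk : ∀ (s a : S), act s (Quotient.mk sd a) = Quotient.mk sd (s * a) :=
      fun s a => rfl
    have act_mul : ∀ (s t : S) (x : X), act (s * t) x = act s (act t x) := by
      intro s t x
      induction x using Quotient.ind with
      | _ a => simp [act_mk, mul_assoc]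
    have act_one : ∀ x : X, act 1 x = x := by
      intro x
      induction x using Quotient.ind with
      | _ a => simp [act_mk]
    -- the two homomorphisms
    let f : S →* Function.End (X × Bool) :=
      { toFun := fun s p => (act s p.1, p.2)
        map_one' := by
          funext p
          show (act 1 p.1, p.2) = p
          rw [act_one]
        map_mul' := by
          intro s t; funext p
          show (act (s * t) p.1, p.2) = (act s (act t p.1), p.2)
          rw [act_mul] }
    let g : S →* Function.End (X × Bool) :=
      { toFun := fun s p => (act s p.1, xor p.2 (xor (qb p.1) (qb (act s p.1))))
        map_one' := by
          funext p
          show (act 1 p.1, xor p.2 (xor (qb p.1) (qb (act 1 p.1)))) = p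
          rw [act_one]
          simp
        map_mul' := by
          intro s t; funext p
          show (act (s * t) p.1, xor p.2 (xor (qb p.1) (qb (act (s * t) p.1)))) =
            (act s (act t p.1),
              xor (xor p.2 (xor (qb p.1) (qb (act t p.1))))
                (xor (qb (act t p.1)) (qb (act s (act t p.1)))))
          rw [act_mul]
          congr 1
          generalize p.2 = b
          generalize qb p.1 = q0
          generalize qb (act t p.1) = q1
          generalize qb (act s (act t p.1)) = q2
          cases b <;> cases q0 <;> cases q1 <;> cases q2 <;> rfl }
    have hfg : ∀ u ∈ H, f u = g u := by
      intro u hu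
      obtain ⟨u', hu', huu', hu'u⟩ := hgrp u hu
      funext p
      show (act u p.1, p.2) = (act u p.1, xor p.2 (xor (qb p.1) (qb (act u p.1))))
      have : qb (act u p.1) = qb p.1 := by
        induction p.1 using Quotient.ind with
        | _ a =>
          rw [act_mk]
          show decide (u * a ∈ H) = decide (a ∈ H)
          by_cases ha : a ∈ H
          · simp [ha, H.mul_mem hu ha]
          · have : ¬ u * a ∈ H := by
              intro hm
              exact ha (by simpa [← mul_assoc, hu'u] using H.mul_mem hu' hm)
            simp [ha, this]
      rw [this]
      cases p.2 <;> cases qb p.1 <;> rfl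
    have hde := congrFun (hd _ f g hfg) (Quotient.mk sd 1, false)
    have h1 : qb (Quotient.mk sd 1) = true := by
      show decide ((1 : S) ∈ H) = true; simp [H.one_mem]
    have h2 : qb (act d (Quotient.mk sd 1)) = false := by
      rw [act_mk]
      show decide (d * 1 ∈ H) = false
      rw [mul_one]
      exact decide_eq_false fun hm => hdH hm
    have : (act d (Quotient.mk sd 1), false) =
        (act d (Quotient.mk sd 1),
          xor false (xor (qb (Quotient.mk sd 1)) (qb (act d (Quotient.mk sd 1))))) := hde
    rw [h1, h2] at this
    simp at this
  · intro u hu T _ f g hfg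
    exact hfg u hu
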